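/- Let τ be a topology on a set X with a countable basis 𝓑 and let I be a σ-ideal of subsets of X. Then the family H := {V ∖ M : V ∈ τ, M ∈ I} is itself a topology on X (so the topology generated by H is H itself); in particular, every W ∈ H can be written as W = (⋃_{B ∈ 𝓑_W} B) ∖ M for some M ∈ I, where 𝓑_W := {B ∈ 𝓑 : B ∖ L ⊆ W for some L ∈ I}. -/

import Mathlib

open Set Topology TopologicalSpace

lemma hash_sUnion_ideal {X : Type*} (I : Set (Set X)) (hempty : ∅ ∈ I)
    (hunion : ∀ f : ℕ → Set X, (∀ n, f n ∈ I) → (⋃ n, f n) ∈ I)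
    {T : Set (Set X)} (hT : T.Countable) (hTI : ∀ t ∈ T, t ∈ I) :
    ⋃₀ T ∈ I := by
  rcases T.eq_empty_or_nonempty with rfl | hne
  · simpa using hempty
  · obtain ⟨f, rfl⟩ := hT.exists_eq_range hne
    rw [sUnion_range]
    exact hunion f fun n => hTI _ (mem_range_self n)

lemma hash_key {X : Type*} [TopologicalSpace X]
    (𝓑 : Set (Set X)) (hbasis : IsTopologicalBasis 𝓑) (hcount : 𝓑.Countable)
    (I : Set (Set X)) (hempty : ∅ ∈ I)
    (hmono : ∀ s t : Set X, s ⊆ t → t ∈ I → s ∈ I)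
    (hunion : ∀ f : ℕ → Set X, (∀ n, f n ∈ I) → (⋃ n, f n) ∈ I)
    (𝒮 : Set (Set X)) (h𝒮 : ∀ s ∈ 𝒮, ∃ V M : Set X, IsOpen V ∧ M ∈ I ∧ s = V \ M) :
    ∃ M ∈ I, ⋃₀ 𝒮 = (⋃₀ {B ∈ 𝓑 | ∃ L ∈ I, B \ L ⊆ ⋃₀ 𝒮}) \ M := by
  classical
  set W := ⋃₀ 𝒮 with hW
  set 𝓑' := {B ∈ 𝓑 | ∃ L ∈ I, B \ L ⊆ W} with h𝓑'
  set U := ⋃₀ 𝓑' with hU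
  choose L hLI hLsub using fun B (hB : B ∈ 𝓑') => hB.2
  -- W ⊆ U
  have hWU : W ⊆ U := by
    rintro x ⟨s, hs, hxs⟩
    obtain ⟨V, M, hV, hMI, rfl⟩ := h𝒮 s hs
    obtain ⟨B, hB𝓑, hxB, hBV⟩ := hbasis.exists_subset_of_mem_open hxs.1 hV
    exact ⟨B, ⟨hB𝓑, M, hMI, fun y hy => ⟨V \ M, hs, hBV hy.1, hy.2⟩⟩, hxB⟩
  -- U \ W ∈ I
  set g : Set X → Set X := fun B => if h : B ∈ 𝓑' then L B h else ∅ with hg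
  have hMI : U \ W ∈ I := by
    apply hmono _ (⋃₀ (g '' 𝓑'))
    · rintro x ⟨⟨B, hB, hxB⟩, hxW⟩
      refine ⟨g B, mem_image_of_mem g hB, ?_⟩
      rw [hg]
      simp only [hB, dif_pos]
      by_contra hxL
      exact hxW (hLsub B hB ⟨hxB, hxL⟩)
    · apply hash_sUnion_ideal I hempty hunion
        ((hcount.mono (sep_subset _ _)).image g)
      rintro t ⟨B, hB, rfl⟩
      simp only [hg, hB, dif_pos]
      convert hLI B hB using 1; exact dif_pos hB
  exact ⟨U \ W, hMI, (diff_diff_cancel_left hWU).symm⟩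

/-- Hashimoto's theorem: for a topology with countable basis `𝓑` and a
`σ`-ideal `I`, the family `𝓗 = {V \ M : V open, M ∈ I}` is itself the
topology it generates, and every `W ∈ 𝓗` has the representation
`W = (⋃ 𝓑_W) \ M` for some `M ∈ I`, where
`𝓑_W = {B ∈ 𝓑 : B \ L ⊆ W for some L ∈ I}`. -/
theorem stmt_7 {X : Type*} [TopologicalSpace X]
    (𝓑 : Set (Set X)) (hbasis : IsTopologicalBasis 𝓑) (hcount : 𝓑.Countable)
    (I : Set (Set X)) (hempty : ∅ ∈ I)
    (hmono : ∀ s t : Set X, s ⊆ t → t ∈ I → s ∈ I)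
    (hunion : ∀ f : ℕ → Set X, (∀ n, f n ∈ I) → (⋃ n, f n) ∈ I) :
    (∀ S : Set X,
      IsOpen[TopologicalSpace.generateFrom
          {W : Set X | ∃ V M : Set X, IsOpen V ∧ M ∈ I ∧ W = V \ M}] S ↔
        ∃ V M : Set X, IsOpen V ∧ M ∈ I ∧ S = V \ M) ∧
    (∀ W : Set X, (∃ V M : Set X, IsOpen V ∧ M ∈ I ∧ W = V \ M) →
      ∃ M ∈ I, W = (⋃₀ {B ∈ 𝓑 | ∃ L ∈ I, B \ L ⊆ W}) \ M) := by
  constructor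
  · intro S
    constructor
    · intro hS
      induction hS with
      | basic s hs => exact hs
      | univ => exact ⟨univ, ∅, isOpen_univ, hempty, by simp⟩
      | inter s t _ _ ihs iht =>
        obtain ⟨V1, M1, hV1, hM1, rfl⟩ := ihs
        obtain ⟨V2, M2, hV2, hM2, rfl⟩ := iht
        refine ⟨V1 ∩ V2, M1 ∪ M2, hV1.inter hV2, ?_, by ext x; simp; tauto⟩
        have := hunion (fun n => if n = 0 then M1 else M2)
          (fun n => by show (if n = 0 then M1 else M2) ∈ I; split <;> assumption)
        apply hmono _ _ _ this
        intro x hx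
        rcases hx with h | h
        · exact mem_iUnion.2 ⟨0, by simpa using h⟩
        · exact mem_iUnion.2 ⟨1, by simpa using h⟩
      | sUnion 𝒮 _ ih =>
        obtain ⟨M, hMI, hEq⟩ := hash_key 𝓑 hbasis hcount I hempty hmono hunion 𝒮 ih
        exact ⟨⋃₀ {B ∈ 𝓑 | ∃ L ∈ I, B \ L ⊆ ⋃₀ 𝒮},
          M, isOpen_sUnion fun B hB => hbasis.isOpen hB.1, hMI, hEq⟩
    · intro h
      exact TopologicalSpace.GenerateOpen.basic S h
  · intro W hW
    have := hash_key 𝓑 hbasis hcount I hempty hmono hunion {W}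
      (by rintro s rfl; exact hW)
    simpa using this
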